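/- Let d ≥ 2 and let ‖·‖_X and ‖·‖_Y be symmetric norms on ℝ^d (invariant under permutations of coordinates and sign changes) with ‖e_i‖_X = ‖e_i‖_Y = 1 for the standard basis vectors. Set λ_X(ℓ) := ‖∑_{i=1}^ℓ e_i‖_X and λ_Y(ℓ) := ‖∑_{i=1}^ℓ e_i‖_Y. Then for all natural numbers k with 1 ≤ k ≤ d − 1, the entropy numbers satisfy e_k(S_X, B_Y) ≥ (1/(2e)) · max_{ℓ = k, …, d−1} λ_Y(ℓ)/λ_X(ℓ), where S_X = {x : ‖x‖_X = 1} and B_Y = {x : ‖x‖_Y ≤ 1}. -/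

import Mathlib

open scoped Pointwise BigOperators

/-- A symmetric norm on `ℝ^d`: a norm invariant under permutations of coordinates and under
sign changes. -/
def IsSymmNorm {d : ℕ} (f : (Fin d → ℝ) → ℝ) : Prop :=
  (∀ x, 0 ≤ f x) ∧ (∀ x, f x = 0 ↔ x = 0) ∧
  (∀ (l : ℝ) (x), f (l • x) = |l| * f x) ∧
  (∀ x y, f (x + y) ≤ f x + f y) ∧
  (∀ (π : Equiv.Perm (Fin d)) (ε : Fin d → ℝ), (∀ i, ε i = 1 ∨ ε i = -1) →
    ∀ x : Fin d → ℝ, f (fun i => ε i * x (π i)) = f x)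

/-- `λ_E(ℓ) = ‖∑_{i=1}^ℓ e_i‖_E`, the norm of the sum of the first `ℓ` standard basis
vectors. -/
noncomputable def lam {d : ℕ} (f : (Fin d → ℝ) → ℝ) (l : ℕ) : ℝ :=
  f (fun i => if (i : ℕ) < l then 1 else 0)

/-- The `k`-th (dyadic) entropy number of `K` with respect to the "unit ball" `B`:
the infimum of all `ε > 0` such that `K` can be covered by `2^(k-1)` translates of `ε • B`. -/
noncomputable def entropyNumber {d : ℕ} (K B : Set (Fin d → ℝ)) (k : ℕ) : ℝ :=
  sInf {ε : ℝ | 0 < ε ∧ ∃ c : Fin (2 ^ (k - 1)) → (Fin d → ℝ),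
    K ⊆ ⋃ j, (c j +ᵥ ε • B)}

open MeasureTheory

section Aux
variable {d : ℕ} {f : (Fin d → ℝ) → ℝ} (hf : IsSymmNorm f)
include hf

lemma sn_zero : f 0 = 0 := (hf.2.1 0).2 rfl

lemma sn_smul (c : ℝ) (x) : f (c • x) = |c| * f x := hf.2.2.1 c x

lemma sn_add_le (x y) : f (x + y) ≤ f x + f y := hf.2.2.2.1 x y

lemma sn_flip (ε : Fin d → ℝ) (hε : ∀ i, ε i = 1 ∨ ε i = -1) (x) :
    f (fun i => ε i * x i) = f x := hf.2.2.2.2 (Equiv.refl _) ε hε x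

lemma sn_coord {i : Fin d} (hfe : f (Pi.single i 1) = 1) (x) : |x i| ≤ f x := by
  set ε : Fin d → ℝ := fun j => if j = i then 1 else -1 with hεdef
  have hε : ∀ j, ε j = 1 ∨ ε j = -1 := by
    intro j; by_cases h : j = i <;> simp [hεdef, h]
  have h1 : f (fun j => ε j * x j) = f x := sn_flip hf ε hε x
  have h2 : x + (fun j => ε j * x j) = (2 * x i) • (Pi.single i 1 : Fin d → ℝ) := by
    funext j
    by_cases h : j = i
    · subst h; simp [hεdef, Pi.single_apply]; ring
    · simp only [hεdef, Pi.add_apply, Pi.smul_apply, Pi.single_apply, if_neg h, smul_eq_mul]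
      ring
  have h3 : f (x + fun j => ε j * x j) ≤ f x + f x := by
    have := sn_add_le hf x (fun j => ε j * x j); rw [h1] at this; exact this
  rw [h2, sn_smul hf, hfe, mul_one, abs_mul] at h3
  simp only [Nat.abs_ofNat] at h3
  linarith [abs_nonneg (x i)]

lemma sn_sum_le {ι : Type*} (s : Finset ι) (g : ι → Fin d → ℝ) :
    f (∑ i ∈ s, g i) ≤ ∑ i ∈ s, f (g i) := by
  classical
  induction s using Finset.induction_on with
  | empty => simp [sn_zero hf]
  | insert _ _ hns ih =>
      rw [Finset.sum_insert hns, Finset.sum_insert hns]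
      exact le_trans (sn_add_le hf _ _) (by linarith)

lemma sn_le_l1 (hfe : ∀ i : Fin d, f (Pi.single i 1) = 1) (x : Fin d → ℝ) :
    f x ≤ ∑ i, |x i| := by
  have hx : x = ∑ i, (x i) • (Pi.single i 1 : Fin d → ℝ) := by
    funext j
    simp [Pi.single_apply, Finset.sum_ite_eq', mul_comm]
  calc f x = f (∑ i, (x i) • (Pi.single i 1 : Fin d → ℝ)) := by rw [← hx]
    _ ≤ ∑ i, f ((x i) • (Pi.single i 1 : Fin d → ℝ)) := sn_sum_le hf _ _
    _ = ∑ i, |x i| := by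
        refine Finset.sum_congr rfl fun i _ => ?_
        rw [sn_smul hf, hfe i, mul_one]

lemma sn_continuous (hfe : ∀ i : Fin d, f (Pi.single i 1) = 1) : Continuous f := by
  have key : ∀ a b : Fin d → ℝ, f a - f b ≤ (d : ℝ) * dist a b := by
    intro a b
    have h1 : f a ≤ f (a - b) + f b := by
      have := sn_add_le hf (a - b) b; simpa using this
    have h2 : f (a - b) ≤ ∑ i, |a i - b i| := by
      simpa using sn_le_l1 hf hfe (a - b)
    have h3 : ∑ i : Fin d, |a i - b i| ≤ (d : ℝ) * dist a b := by
      calc ∑ i : Fin d, |a i - b i| ≤ ∑ _i : Fin d, dist a b :=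
            Finset.sum_le_sum fun i _ => by
              rw [← Real.dist_eq]; exact dist_le_pi_dist a b i
        _ = (d : ℝ) * dist a b := by simp [mul_comm]
    linarith
  have : LipschitzWith (d : NNReal) f := by
    rw [lipschitzWith_iff_dist_le_mul]
    intro a b
    rw [Real.dist_eq, abs_sub_le_iff]
    constructor
    · exact le_trans (key a b) (by push_cast; exact le_rfl)
    · have := key b a; rw [dist_comm] at this; exact le_trans this (by push_cast; exact le_rfl)
  exact this.continuous

lemma sn_zero_coords (x : Fin d → ℝ) (s : Finset (Fin d)) :
    f (fun i => if i ∈ s then 0 else x i) ≤ f x := by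
  classical
  induction s using Finset.induction_on with
  | empty => simp
  | @insert a s hns ih =>
      set y : Fin d → ℝ := fun i => if i ∈ s then 0 else x i with hy
      set ε : Fin d → ℝ := fun i => if i = a then -1 else 1 with hε
      have hεv : ∀ i, ε i = 1 ∨ ε i = -1 := by
        intro i; by_cases h : i = a <;> simp [hε, h]
      have hflip : f (fun i => ε i * y i) = f y := sn_flip hf ε hεv y
      have hz : (fun i => if i ∈ insert a s then 0 else x i)
          = (1/2 : ℝ) • (y + fun i => ε i * y i) := by
        funext i
        by_cases h : i = a
        · subst h
          simp only [Finset.mem_insert, true_or, if_pos, Pi.smul_apply, Pi.add_apply, hε,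
            if_pos rfl, smul_eq_mul]
          ring
        · simp only [Finset.mem_insert, h, false_or, Pi.smul_apply, Pi.add_apply, hε,
            if_neg h, smul_eq_mul, hy]
          norm_num
          ring
      calc f (fun i => if i ∈ insert a s then 0 else x i)
          = (1/2 : ℝ) * f (y + fun i => ε i * y i) := by
            rw [hz, sn_smul hf]; norm_num
        _ ≤ (1/2 : ℝ) * (f y + f y) := by
            have := sn_add_le hf y (fun i => ε i * y i)
            rw [hflip] at this
            linarith
        _ = f y := by ring
        _ ≤ f x := ih

lemma sn_sign_pattern {l : ℕ} (x : Fin d → ℝ) {c : ℝ} (hc : 0 ≤ c)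
    (h1 : ∀ i : Fin d, (i : ℕ) < l → |x i| = c)
    (h2 : ∀ i : Fin d, l ≤ (i : ℕ) → x i = 0) :
    f x = c * lam f l := by
  set ε : Fin d → ℝ := fun i => if x i < 0 then -1 else 1 with hε
  have hεv : ∀ i, ε i = 1 ∨ ε i = -1 := by
    intro i; by_cases h : x i < 0 <;> simp [hε, h]
  have hx : x = c • (fun i => ε i * (if (i : ℕ) < l then 1 else 0)) := by
    funext i
    by_cases h : (i : ℕ) < l
    · have := h1 i h
      simp only [Pi.smul_apply, if_pos h, mul_one, smul_eq_mul, hε]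
      rcases abs_cases (x i) with ⟨he, hp⟩ | ⟨he, hp⟩
      · rw [if_neg (by linarith), mul_one]; linarith
      · by_cases h0 : x i < 0
        · rw [if_pos h0]; linarith
        · rw [if_neg h0]; nlinarith
    · simp only [Pi.smul_apply, if_neg h, mul_zero, smul_eq_mul, h2 i (le_of_not_gt h)]
  rw [hx, sn_smul hf, abs_of_nonneg hc, sn_flip hf ε hεv]
  rfl

lemma sn_cube {l : ℕ} {c : ℝ} (hc : 0 ≤ c) (hl : l ≤ d) :
    ∀ m : ℕ, ∀ x : Fin d → ℝ, (∀ i, |x i| ≤ c) → (∀ i : Fin d, l ≤ (i : ℕ) → x i = 0) →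
    (∀ i : Fin d, m ≤ (i : ℕ) → (i : ℕ) < l → |x i| = c) →
    f x ≤ c * lam f l := by
  intro m
  induction m with
  | zero =>
      intro x hb hs hsign
      exact le_of_eq (sn_sign_pattern hf x hc (fun i hi => hsign i (Nat.zero_le _) hi) hs)
  | succ m ih =>
      intro x hb hs hsign
      by_cases hml : m < l
      · have hmd : m < d := lt_of_lt_of_le hml hl
        set a : Fin d := ⟨m, hmd⟩ with ha
        rcases eq_or_lt_of_le hc with hc0 | hcpos
        · have hx0 : x = 0 := by
            funext i
            have h1 := hb i
            have h2 := abs_nonneg (x i)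
            have : |x i| = 0 := le_antisymm (by rw [← hc0] at h1; exact h1) h2
            simpa using abs_eq_zero.mp this
          rw [hx0, sn_zero hf]
          have := hf.1 (fun i => if (i : ℕ) < l then (1:ℝ) else 0)
          have hlam : 0 ≤ lam f l := this
          nlinarith
        · classical
          set xp := Function.update x a c with hxp
          set xm := Function.update x a (-c) with hxm
          set α := (c + x a)/(2*c) with hα
          set β := (c - x a)/(2*c) with hβ
          have hxa : |x a| ≤ c := hb a
          have hxa1 : -c ≤ x a := neg_le_of_abs_le hxa
          have hxa2 : x a ≤ c := le_of_abs_le hxa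
          have hα0 : 0 ≤ α := by rw [hα]; exact div_nonneg (by linarith) (by linarith)
          have hβ0 : 0 ≤ β := by
            rw [hβ]
            exact div_nonneg (by linarith) (by linarith)
          have hαβ : α + β = 1 := by rw [hα, hβ]; field_simp; ring
          have hxsplit : x = α • xp + β • xm := by
            funext i
            by_cases h : i = a
            · subst h
              simp only [Pi.add_apply, Pi.smul_apply, hxp, hxm,
                Function.update_self, smul_eq_mul, hα, hβ]
              field_simp
              ring
            · simp only [Pi.add_apply, Pi.smul_apply, hxp, hxm,
                Function.update_of_ne h, smul_eq_mul]
              have : (α + β) * x i = x i := by rw [hαβ, one_mul]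
              linarith [this]
          have hcond : ∀ y : Fin d → ℝ, (∀ i, |y i| ≤ c) → (∀ i : Fin d, l ≤ (i:ℕ) → y i = 0) →
              (∀ i : Fin d, m ≤ (i:ℕ) → (i:ℕ) < l → |y i| = c) → f y ≤ c * lam f l :=
            ih
          have hup : ∀ v : ℝ, |v| = c → f (Function.update x a v) ≤ c * lam f l := by
            intro v hv
            apply hcond
            · intro i
              by_cases h : i = a
              · subst h; rw [Function.update_self, hv]
              · rw [Function.update_of_ne h]; exact hb i
            · intro i hi
              have h : i ≠ a := by
                intro he; subst he; simp only [ha] at hi; omega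
              rw [Function.update_of_ne h]; exact hs i hi
            · intro i h1 h2
              by_cases h : i = a
              · subst h; rw [Function.update_self]; exact hv
              · rw [Function.update_of_ne h]
                refine hsign i ?_ h2
                have : (i : ℕ) ≠ m := fun he => h (Fin.ext (by simp [ha, he]))
                omega
          have h1 : f xp ≤ c * lam f l := hup c (abs_of_nonneg hc)
          have h2 : f xm ≤ c * lam f l := hup (-c) (by rw [abs_neg, abs_of_nonneg hc])
          calc f x = f (α • xp + β • xm) := by rw [← hxsplit]
            _ ≤ f (α • xp) + f (β • xm) := sn_add_le hf _ _
            _ = α * f xp + β * f xm := by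
                rw [sn_smul hf, sn_smul hf, abs_of_nonneg hα0, abs_of_nonneg hβ0]
            _ ≤ α * (c * lam f l) + β * (c * lam f l) := by
                have := mul_le_mul_of_nonneg_left h1 hα0
                have := mul_le_mul_of_nonneg_left h2 hβ0
                nlinarith
            _ = (α + β) * (c * lam f l) := by ring
            _ = c * lam f l := by rw [hαβ]; ring
      · exact ih x hb hs (fun i h1 h2 => hsign i (by omega) h2)

lemma one_le_lam {l : ℕ} (hd0 : 0 < d) (hl0 : 0 < l)
    (hfe : ∀ i : Fin d, f (Pi.single i 1) = 1) : 1 ≤ lam f l := by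
  have h := sn_coord hf (hfe ⟨0, hd0⟩) (fun i => if (i : ℕ) < l then (1:ℝ) else 0)
  simpa [lam, hl0] using h

omit hf in
lemma sum_dite_fin {l : ℕ} (hld : l ≤ d) (g : Fin l → ℝ) :
    ∑ i : Fin d, (if h : (i : ℕ) < l then g ⟨i, h⟩ else 0) = ∑ m : Fin l, g m := by
  classical
  set G : ℕ → ℝ := fun n => if h : n < l then g ⟨n, h⟩ else 0 with hG
  have h1 : ∑ i : Fin d, (if h : (i : ℕ) < l then g ⟨i, h⟩ else 0)
      = ∑ n ∈ Finset.range d, G n := Fin.sum_univ_eq_sum_range G d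
  have h2 : ∑ n ∈ Finset.range d, G n = ∑ n ∈ Finset.range l, G n := by
    symm
    refine Finset.sum_subset (Finset.range_subset_range.mpr hld) fun n hn hnl => ?_
    simp only [Finset.mem_range] at hnl
    simp [hG, hnl]
  have h3 : ∑ n ∈ Finset.range l, G n = ∑ m : Fin l, g m := by
    rw [← Fin.sum_univ_eq_sum_range G l]
    exact Finset.sum_congr rfl fun m _ => by simp [hG, m.2]
  rw [h1, h2, h3]

lemma sn_l1_lower {l : ℕ} (hl0 : 0 < l) (hld : l ≤ d) (x : Fin d → ℝ)
    (hx : ∀ i : Fin d, l ≤ (i : ℕ) → x i = 0) :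
    lam f l * ∑ i, |x i| ≤ (l : ℝ) * f x := by
  classical
  haveI : NeZero l := ⟨hl0.ne'⟩
  set T := ∑ i, |x i| with hTdef
  have hT0 : 0 ≤ T := Finset.sum_nonneg fun i _ => abs_nonneg _
  set g : Fin l → Fin d → Fin d := fun j i =>
    if h : (i : ℕ) < l then ⟨((i : ℕ) + (j : ℕ)) % l, lt_of_lt_of_le (Nat.mod_lt _ hl0) hld⟩
    else i with hg
  have hginj : ∀ j, Function.Injective (g j) := by
    intro j i1 i2 he
    by_cases h1 : (i1 : ℕ) < l <;> by_cases h2 : (i2 : ℕ) < l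
    · rw [hg] at he
      simp only [dif_pos h1, dif_pos h2] at he
      have hv : ((i1 : ℕ) + (j : ℕ)) % l = ((i2 : ℕ) + (j : ℕ)) % l := congrArg Fin.val he
      have h1' : (i1 : ℕ) % l = (i2 : ℕ) % l := Nat.ModEq.add_right_cancel' _ hv
      rw [Nat.mod_eq_of_lt h1, Nat.mod_eq_of_lt h2] at h1'
      exact Fin.ext h1'
    · rw [hg] at he
      simp only [dif_pos h1, dif_neg h2] at he
      have hv : ((i1 : ℕ) + (j : ℕ)) % l = (i2 : ℕ) := congrArg Fin.val he
      have := Nat.mod_lt ((i1 : ℕ) + (j : ℕ)) hl0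
      omega
    · rw [hg] at he
      simp only [dif_neg h1, dif_pos h2] at he
      have hv : (i1 : ℕ) = ((i2 : ℕ) + (j : ℕ)) % l := congrArg Fin.val he
      have := Nat.mod_lt ((i2 : ℕ) + (j : ℕ)) hl0
      omega
    · simp only [hg] at he
      simp only [dif_neg h1, dif_neg h2] at he
      exact he
  have hgbij : ∀ j, Function.Bijective (g j) :=
    fun j => Finite.injective_iff_bijective.mp (hginj j)
  set y : Fin l → Fin d → ℝ := fun j i => |x (g j i)| with hy
  have hfy : ∀ j, f (y j) = f x := by
    intro j
    set ε : Fin d → ℝ := fun i => if x (g j i) < 0 then -1 else 1 with hε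
    have hεv : ∀ i, ε i = 1 ∨ ε i = -1 := by
      intro i; by_cases h : x (g j i) < 0 <;> simp [hε, h]
    have := hf.2.2.2.2 (Equiv.ofBijective (g j) (hgbij j)) ε hεv x
    rw [← this]
    congr 1
    funext i
    show |x (g j i)| = ε i * x (Equiv.ofBijective (g j) (hgbij j) i)
    have : Equiv.ofBijective (g j) (hgbij j) i = g j i := rfl
    rw [this]
    simp only [hε]
    by_cases h : x (g j i) < 0
    · rw [if_pos h, abs_of_neg h]; ring
    · rw [if_neg h, abs_of_nonneg (le_of_not_gt h), one_mul]
  have hsum : ∑ j : Fin l, y j = T • (fun i : Fin d => if (i : ℕ) < l then (1:ℝ) else 0) := by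
    funext i
    rw [Finset.sum_apply]
    by_cases hi : (i : ℕ) < l
    · set F : Fin l → ℝ := fun m => |x ⟨(m : ℕ), lt_of_lt_of_le m.2 hld⟩| with hF
      have hgv : ∀ j : Fin l, g j i = Fin.castLE hld ((⟨(i : ℕ), hi⟩ : Fin l) + j) := by
        intro j
        simp only [hg]
        rw [dif_pos hi]
        exact Fin.ext (by simp [Fin.add_def])
      have hterm : ∀ j : Fin l, y j i = F ((⟨(i : ℕ), hi⟩ : Fin l) + j) := by
        intro j
        show |x (g j i)| = F _
        rw [hgv j]
        rfl
      have hre : ∑ j : Fin l, y j i = ∑ m : Fin l, F m := by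
        rw [Finset.sum_congr rfl fun j _ => hterm j]
        exact Equiv.sum_comp (Equiv.addLeft (⟨(i : ℕ), hi⟩ : Fin l)) F
      have hTF : T = ∑ m : Fin l, F m := by
        rw [hTdef, ← sum_dite_fin hld F]
        refine Finset.sum_congr rfl fun i' _ => ?_
        by_cases h : (i' : ℕ) < l
        · rw [dif_pos h, hF]
        · rw [dif_neg h, hx i' (le_of_not_gt h), abs_zero]
      rw [hre, ← hTF]
      simp [hi]
    · have : ∀ j : Fin l, y j i = 0 := by
        intro j
        rw [hy]
        simp only
        rw [hg]
        simp only [dif_neg hi]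
        rw [hx i (le_of_not_gt hi), abs_zero]
      rw [Finset.sum_congr rfl fun j _ => this j]
      simp [hi]
  have hle : f (∑ j : Fin l, y j) ≤ (l : ℝ) * f x := by
    calc f (∑ j : Fin l, y j) ≤ ∑ j : Fin l, f (y j) := sn_sum_le hf _ _
      _ = (l : ℝ) * f x := by
          rw [Finset.sum_congr rfl fun j _ => hfy j]
          simp [mul_comm]
  rw [hsum, sn_smul hf, abs_of_nonneg hT0] at hle
  calc lam f l * T = T * lam f l := mul_comm _ _
    _ ≤ (l : ℝ) * f x := hle

end Aux

/-- For symmetric norms `‖·‖_X`, `‖·‖_Y` on `ℝ^d` (`d ≥ 2`) with normalized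
standard basis vectors, and `1 ≤ k ≤ d − 1`,
`e_k(S_X, B_Y) ≥ (1/(2e)) · max_{ℓ=k,…,d−1} λ_Y(ℓ)/λ_X(ℓ)`
(stated as the bound for every `ℓ` with `k ≤ ℓ ≤ d − 1`). -/
theorem entropy_symm_lower_small (d : ℕ) (hd : 2 ≤ d)
    (nX nY : (Fin d → ℝ) → ℝ) (hX : IsSymmNorm nX) (hY : IsSymmNorm nY)
    (hXe : ∀ i : Fin d, nX (Pi.single i 1) = 1)
    (hYe : ∀ i : Fin d, nY (Pi.single i 1) = 1)
    (k : ℕ) (hk1 : 1 ≤ k) (hkd : k ≤ d - 1)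
    (l : ℕ) (hl1 : k ≤ l) (hl2 : l ≤ d - 1) :
    (1 / (2 * Real.exp 1)) * (lam nY l / lam nX l) ≤
      entropyNumber {x | nX x = 1} {x | nY x ≤ 1} k := by
  classical
  have hld : l < d := by omega
  have hl0 : 0 < l := by omega
  have hd0 : 0 < d := by omega
  haveI : Nonempty (Fin l) := ⟨⟨0, hl0⟩⟩
  set e1 := Real.exp 1 with he1
  have he1pos : 0 < e1 := Real.exp_pos 1
  set lX := lam nX l with hlX
  set lY := lam nY l with hlY
  have hlX1 : 1 ≤ lX := one_le_lam hX hd0 hl0 hXe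
  have hlY1 : 1 ≤ lY := one_le_lam hY hd0 hl0 hYe
  have hlXpos : 0 < lX := by linarith
  have hlYpos : 0 < lY := by linarith
  rw [entropyNumber]
  apply le_csInf
  · -- the covering set is nonempty: ε = d works with all centers 0
    refine ⟨(d : ℝ), by positivity, fun _ => 0, fun x hx => ?_⟩
    simp only [Set.mem_setOf_eq] at hx
    have hdne : (d : ℝ) ≠ 0 := by positivity
    refine Set.mem_iUnion.mpr ⟨⟨0, by positivity⟩, ?_⟩
    rw [Set.mem_vadd_set]
    refine ⟨(d:ℝ) • ((d:ℝ)⁻¹ • x), Set.smul_mem_smul_set ?_, ?_⟩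
    · show nY ((d:ℝ)⁻¹ • x) ≤ 1
      rw [sn_smul hY, abs_inv, Nat.abs_cast]
      have h1 : nY x ≤ ∑ i, |x i| := sn_le_l1 hY hYe x
      have h2 : ∑ i : Fin d, |x i| ≤ ∑ _i : Fin d, nX x :=
        Finset.sum_le_sum fun i _ => sn_coord hX (hXe i) x
      have h3 : ∑ _i : Fin d, nX x = (d:ℝ) := by rw [Finset.sum_const]; simp [hx]
      have h4 : nY x ≤ (d:ℝ) := by linarith
      calc ((d:ℝ))⁻¹ * nY x ≤ ((d:ℝ))⁻¹ * (d:ℝ) := by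
            apply mul_le_mul_of_nonneg_left h4 (by positivity)
        _ = 1 := inv_mul_cancel₀ hdne
    · rw [smul_inv_smul₀ hdne]
      simp
  · rintro ε ⟨hε, c, hcov⟩
    set E : (Fin l → ℝ) → (Fin d → ℝ) :=
      fun y i => if h : (i : ℕ) < l then y ⟨i, h⟩ else 0 with hE
    set R : (Fin d → ℝ) → (Fin l → ℝ) := fun z m => z (Fin.castLE hld.le m) with hR
    set r : ℝ := 1/lX with hr
    have hrpos : 0 < r := by rw [hr]; positivity
    set Bl : Set (Fin l → ℝ) := {y | nY (E y) ≤ 1} with hBl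
    set Q : Set (Fin l → ℝ) := Set.pi Set.univ fun _ => Set.Icc (-r) r with hQ
    -- support fact for E
    have hEs : ∀ y : Fin l → ℝ, ∀ i : Fin d, l ≤ (i:ℕ) → E y i = 0 := by
      intro y i hi
      simp only [hE]
      rw [dif_neg (Nat.not_lt.mpr hi)]
    have hEsum : ∀ y : Fin l → ℝ, ∑ i : Fin d, |E y i| = ∑ m : Fin l, |y m| := by
      intro y
      rw [← sum_dite_fin hld.le (fun m => |y m|)]
      refine Finset.sum_congr rfl fun i _ => ?_
      by_cases h : (i:ℕ) < l
      · simp only [hE]; rw [dif_pos h, dif_pos h]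
      · simp only [hE]; rw [dif_neg h, dif_neg h, abs_zero]
    -- Step 1: the cube is covered by the projected cover
    have hQcov : Q ⊆ ⋃ j, (R (c j) +ᵥ ε • Bl) := by
      intro y hy
      rw [hQ, Set.mem_univ_pi] at hy
      have hyc : ∀ m, |y m| ≤ r := fun m => abs_le.mpr (hy m)
      have hEb : ∀ i, |E y i| ≤ r := by
        intro i
        by_cases h : (i:ℕ) < l
        · simp only [hE]; rw [dif_pos h]; exact hyc _
        · simp only [hE]; rw [dif_neg h, abs_zero]; exact hrpos.le
      have hnXE : nX (E y) ≤ 1 := by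
        have := sn_cube hX hrpos.le hld.le l (E y) hEb (hEs y)
          (fun i h1 h2 => absurd h2 (by omega))
        calc nX (E y) ≤ r * lX := this
          _ = 1 := by rw [hr]; field_simp
      set a : Fin d := ⟨l, hld⟩ with ha
      have hcont : Continuous (fun t : ℝ => nX (E y + t • (Pi.single a 1 : Fin d → ℝ))) := by
        apply (sn_continuous hX hXe).comp
        continuity
      have hf0 : nX (E y + (0:ℝ) • (Pi.single a 1 : Fin d → ℝ)) ≤ 1 := by
        rw [zero_smul, add_zero]; exact hnXE
      have hf1 : 1 ≤ nX (E y + (1:ℝ) • (Pi.single a 1 : Fin d → ℝ)) := by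
        have hcoord := sn_coord hX (hXe a) (E y + (1:ℝ) • (Pi.single a 1 : Fin d → ℝ))
        have hva : (E y + (1:ℝ) • (Pi.single a 1 : Fin d → ℝ)) a = 1 := by
          simp only [Pi.add_apply, Pi.smul_apply, smul_eq_mul, one_mul, Pi.single_eq_same, hE]
          rw [dif_neg (by simp [ha])]
          ring
        rw [hva] at hcoord
        simpa using hcoord
      obtain ⟨t, _, ht⟩ := intermediate_value_Icc (by norm_num : (0:ℝ) ≤ 1)
        hcont.continuousOn ⟨hf0, hf1⟩
      set z := E y + t • (Pi.single a 1 : Fin d → ℝ) with hz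
      obtain ⟨j, hj⟩ := Set.mem_iUnion.mp (hcov (show z ∈ {x | nX x = 1} from ht))
      rw [Set.mem_vadd_set] at hj
      obtain ⟨w, hw, hwz⟩ := hj
      obtain ⟨b, hb, hbw⟩ := Set.mem_smul_set.mp hw
      refine Set.mem_iUnion.mpr ⟨j, ?_⟩
      rw [Set.mem_vadd_set]
      refine ⟨ε • R b, Set.smul_mem_smul_set ?_, ?_⟩
      · show nY (E (R b)) ≤ 1
        have hzero := sn_zero_coords hY b
          (Finset.univ.filter (fun i : Fin d => ¬ (i:ℕ) < l))
        have hEeq : E (R b)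
            = fun i => if i ∈ Finset.univ.filter (fun i : Fin d => ¬ (i:ℕ) < l)
              then 0 else b i := by
          funext i
          by_cases h : (i:ℕ) < l
          · simp only [hE, hR]
            rw [dif_pos h, if_neg (by simp [h])]
            congr 1
          · simp only [hE, hR]
            rw [dif_neg h, if_pos (by simp only [Finset.mem_filter, Finset.mem_univ, true_and]; exact h)]
        rw [hEeq]
        exact le_trans hzero hb
      · funext m
        have hcm : (Fin.castLE hld.le m : Fin d) ≠ a := by
          intro hcon
          have : ((Fin.castLE hld.le m : Fin d) : ℕ) = l := by rw [hcon]
          simp at this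
          omega
        have hzm : z (Fin.castLE hld.le m) = y m := by
          rw [hz]
          simp only [Pi.add_apply, Pi.smul_apply, smul_eq_mul, hE]
          rw [Pi.single_eq_of_ne hcm, dif_pos (show ((Fin.castLE hld.le m : Fin d) : ℕ) < l from m.isLt)]
          show y m + t * 0 = y m
          ring
        have hwm := congrFun hwz (Fin.castLE hld.le m)
        rw [hzm] at hwm
        rw [← hbw] at hwm
        simp only [vadd_eq_add, Pi.add_apply, Pi.smul_apply, smul_eq_mul] at hwm
        simp only [vadd_eq_add, Pi.add_apply, Pi.smul_apply, smul_eq_mul, hR]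
        exact hwm
    -- Step 2: volumes
    have hvol1 : volume Q = ENNReal.ofReal (2*r) ^ l := by
      rw [hQ, volume_pi_pi]
      simp only [Real.volume_Icc]
      rw [Finset.prod_const]
      congr 2
      · ring
      · simp
    have hvol2 : volume Q ≤ (2^(k-1) : ℕ) * (ENNReal.ofReal (ε^l) * volume Bl) := by
      calc volume Q ≤ volume (⋃ j, (R (c j) +ᵥ ε • Bl)) := measure_mono hQcov
        _ ≤ ∑ j : Fin (2^(k-1)), volume (R (c j) +ᵥ ε • Bl) := measure_iUnion_fintype_le _ _
        _ = ∑ _j : Fin (2^(k-1)), ENNReal.ofReal (ε^l) * volume Bl := by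
            refine Finset.sum_congr rfl fun j _ => ?_
            rw [measure_vadd (μ := volume), Measure.addHaar_smul_of_nonneg volume hε.le]
            congr 2
            simp [Module.finrank_fintype_fun_eq_card]
        _ = (2^(k-1) : ℕ) * (ENNReal.ofReal (ε^l) * volume Bl) := by
            rw [Finset.sum_const, Finset.card_univ, Fintype.card_fin, nsmul_eq_mul]
    have hvol3 : volume Bl ≤ ENNReal.ofReal (((l:ℝ)/lY) ^ l * (2^l / (Nat.factorial l))) := by
      have hsub : Bl ⊆ {x : Fin l → ℝ | ∑ i, |x i| ≤ (l:ℝ)/lY} := by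
        intro y hy
        have hyB : nY (E y) ≤ 1 := hy
        have hkey := sn_l1_lower hY hl0 hld.le (E y) (hEs y)
        rw [hEsum y] at hkey
        have h5 : lY * ∑ m : Fin l, |y m| ≤ (l:ℝ) := by
          calc lY * ∑ m : Fin l, |y m| ≤ (l:ℝ) * nY (E y) := hkey
            _ ≤ (l:ℝ) * 1 := by
                apply mul_le_mul_of_nonneg_left hyB (by positivity)
            _ = (l:ℝ) := mul_one _
        show ∑ m : Fin l, |y m| ≤ (l:ℝ)/lY
        rw [le_div_iff₀ hlYpos]
        linarith
      calc volume Bl ≤ volume {x : Fin l → ℝ | ∑ i, |x i| ≤ (l:ℝ)/lY} := measure_mono hsub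
        _ = ENNReal.ofReal ((l:ℝ)/lY) ^ l * ENNReal.ofReal (2^l / (Nat.factorial l)) := by
            have h := MeasureTheory.volume_sum_rpow_le (Fin l) (p := 1) le_rfl ((l:ℝ)/lY)
            simp only [Real.rpow_one, one_div_one, Fintype.card_fin] at h
            rw [h]
            congr 1
            rw [show (1:ℝ)+1 = 2 by norm_num, Real.Gamma_two]
            rw [show ((l:ℝ) / 1 + 1) = ((l:ℝ) + 1) by ring, Real.Gamma_nat_eq_factorial]
            norm_num
        _ = ENNReal.ofReal (((l:ℝ)/lY) ^ l * (2^l / (Nat.factorial l))) := by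
            rw [← ENNReal.ofReal_pow (by positivity), ← ENNReal.ofReal_mul (by positivity)]
    -- combine into a real inequality
    have hreal : (2*r)^l ≤ (2^(k-1) : ℕ) * (ε^l * (((l:ℝ)/lY)^l * (2^l / (Nat.factorial l)))) := by
      have hchain : ENNReal.ofReal ((2*r)^l)
          ≤ ENNReal.ofReal ((2^(k-1) : ℕ) * (ε^l * (((l:ℝ)/lY)^l * (2^l / (Nat.factorial l))))) := by
        rw [ENNReal.ofReal_pow (by positivity)]
        calc ENNReal.ofReal (2*r) ^ l = volume Q := hvol1.symm
          _ ≤ (2^(k-1) : ℕ) * (ENNReal.ofReal (ε^l) * volume Bl) := hvol2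
          _ ≤ (2^(k-1) : ℕ) * (ENNReal.ofReal (ε^l)
              * ENNReal.ofReal (((l:ℝ)/lY) ^ l * (2^l / (Nat.factorial l)))) := by
              exact mul_le_mul_right (mul_le_mul_right hvol3 _) _
          _ = ENNReal.ofReal ((2^(k-1) : ℕ) * (ε^l * (((l:ℝ)/lY)^l * (2^l / (Nat.factorial l))))) := by
              rw [← ENNReal.ofReal_mul (by positivity), ← ENNReal.ofReal_natCast (2^(k-1)),
                ← ENNReal.ofReal_mul (by positivity)]
      exact (ENNReal.ofReal_le_ofReal_iff (by positivity)).mp hchain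
    -- Step 3: arithmetic
    set A := 1/(2*e1) * (lY/lX) with hA
    have hfl0 : (0:ℝ) < (Nat.factorial l : ℝ) := by positivity
    have hfact : (l:ℝ)^l ≤ e1^l * (Nat.factorial l : ℝ) := by
      have h := Real.pow_div_factorial_le_exp (x := (l:ℝ)) (by positivity) l
      rw [div_le_iff₀ hfl0] at h
      calc (l:ℝ)^l ≤ Real.exp l * (Nat.factorial l : ℝ) := h
        _ = e1^l * (Nat.factorial l : ℝ) := by rw [he1, Real.exp_one_pow]
    have hN : ((2:ℝ))^(k-1) ≤ 2^l := pow_le_pow_right₀ (by norm_num) (by omega)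
    have hcore : (l:ℝ)^l * 2^(k-1) ≤ 2^l * e1^l * (Nat.factorial l : ℝ) := by
      calc (l:ℝ)^l * 2^(k-1) ≤ (e1^l * (Nat.factorial l : ℝ)) * 2^l :=
            mul_le_mul hfact hN (by positivity) (by positivity)
        _ = 2^l * e1^l * (Nat.factorial l : ℝ) := by ring
    have hC0 : (0:ℝ) < ((2:ℝ)^(k-1)) * (((l:ℝ)/lY)^l * (2^l / (Nat.factorial l))) := by positivity
    have hkey : A^l * (((2:ℝ)^(k-1)) * (((l:ℝ)/lY)^l * (2^l / (Nat.factorial l)))) ≤ (2*r)^l := by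
      have hA' : A = lY / (2*e1*lX) := by rw [hA]; field_simp
      have hne1 : lX ≠ 0 := ne_of_gt hlXpos
      have hne2 : lY ≠ 0 := ne_of_gt hlYpos
      have hne3 : e1 ≠ 0 := ne_of_gt he1pos
      have hne4 : (Nat.factorial l : ℝ) ≠ 0 := ne_of_gt hfl0
      have heq : A^l * (((2:ℝ)^(k-1)) * (((l:ℝ)/lY)^l * (2^l / (Nat.factorial l))))
          = ((2:ℝ)^(k-1) * (l:ℝ)^l) / (e1^l * lX^l * (Nat.factorial l : ℝ)) := by
        rw [hA', div_pow, div_pow, mul_pow, mul_pow]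
        field_simp
      have heq2 : (2*r)^l = (2:ℝ)^l / lX^l := by
        rw [hr, show 2*(1/lX) = 2/lX by ring, div_pow]
      rw [heq, heq2, div_le_div_iff₀ (by positivity) (by positivity)]
      have hp : (0:ℝ) ≤ lX^l := by positivity
      nlinarith [mul_le_mul_of_nonneg_right hcore hp]
    have hfinal : A ^ l ≤ ε ^ l := by
      refine le_of_mul_le_mul_right ?_ hC0
      calc A^l * _ ≤ (2*r)^l := hkey
        _ ≤ ε^l * (((2:ℝ)^(k-1)) * (((l:ℝ)/lY)^l * (2^l / (Nat.factorial l)))) := by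
            calc (2*r)^l ≤ (2^(k-1) : ℕ) * (ε^l * (((l:ℝ)/lY)^l * (2^l / (Nat.factorial l)))) := hreal
              _ = ε^l * (((2:ℝ)^(k-1)) * (((l:ℝ)/lY)^l * (2^l / (Nat.factorial l)))) := by
                  push_cast
                  ring
    have := le_of_pow_le_pow_left₀ (by omega : l ≠ 0) hε.le hfinal
    exact this
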